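/- Consider the stochastic iteration x_{n+1} = x_n − λ_n d_n in a separable real Hilbert space H, where x_0 ∈ L^2, and at each step d_n ∈ L^2(Ω,F,P;H), λ_n ∈ L^∞(Ω,F,P;(0,∞)), E[λ_n(2−λ_n)‖d_n‖² | X_n] ≥ 0 a.s. with X_n = σ(x_0,…,x_n), and for every z ∈ Z, E[λ_n⟨z + d_n − x_n, d_n⟩ | X_n] ≤ δ_n(·,z)/2 a.s. for nonnegative Carathéodory integrands δ_n. Then for every n ∈ ℕ and every z ∈ Z: E[‖x_{n+1} − z‖² | X_n] ≤ ‖x_n − z‖² − E[λ_n(2−λ_n)‖d_n‖² | X_n] + δ_n(·,z) almost surely. -/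

import Mathlib

open Filter MeasureTheory

/-- `σ(x_0, …, x_n)`. -/
def sigmaUpTo {Ω H : Type*} [MeasurableSpace H] (x : ℕ → Ω → H) (n : ℕ) :
    MeasurableSpace Ω :=
  ⨆ i ∈ Set.Iic n, MeasurableSpace.comap (x i) inferInstance

/-- Fundamental inequality for the stochastic iteration `x_{n+1} = x_n − λ_n d_n`
(Algorithm 3): for every `n` and every `z ∈ Z`,
`E[‖x_{n+1}−z‖² | X_n] ≤ ‖x_n−z‖² − E[λ_n(2−λ_n)‖d_n‖² | X_n] + δ_n(·,z)` a.s. -/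
theorem stmt7 {Ω H : Type*} {m0 : MeasurableSpace Ω} (μ : Measure Ω)
    [IsProbabilityMeasure μ] (hcomp : μ.IsComplete)
    [NormedAddCommGroup H] [InnerProductSpace ℝ H] [SecondCountableTopology H]
    [CompleteSpace H] [MeasurableSpace H] [BorelSpace H]
    (Z : Set H) (hZne : Z.Nonempty) (hZcl : IsClosed Z)
    (x d : ℕ → Ω → H) (lam : ℕ → Ω → ℝ) (δ : ℕ → Ω → H → ℝ)
    (hsub : ∀ n, sigmaUpTo x n ≤ m0)
    (hx0 : MemLp (x 0) 2 μ)
    (hd : ∀ n, MemLp (d n) 2 μ)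
    (hlam_meas : ∀ n, Measurable (lam n))
    (hlam_pos : ∀ n, ∀ᵐ ω ∂μ, 0 < lam n ω)
    (hlam_bdd : ∀ n, ∃ c : ℝ, ∀ᵐ ω ∂μ, lam n ω ≤ c)
    (hδ_nonneg : ∀ n, ∀ z ∈ Z, ∀ᵐ ω ∂μ, 0 ≤ δ n ω z)
    (hδ_int : ∀ n, ∀ z ∈ Z, Integrable (fun ω => δ n ω z) μ)
    (hpos : ∀ n, ∀ᵐ ω ∂μ,
      0 ≤ (μ[fun ω' => lam n ω' * (2 - lam n ω') * ‖d n ω'‖ ^ 2 | sigmaUpTo x n]) ω)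
    (hgeom : ∀ n, ∀ z ∈ Z, ∀ᵐ ω ∂μ,
      (μ[fun ω' => lam n ω' * (inner ℝ (z + d n ω' - x n ω') (d n ω') : ℝ) |
          sigmaUpTo x n]) ω ≤ δ n ω z / 2)
    (hupdate : ∀ n ω, x (n + 1) ω = x n ω - lam n ω • d n ω) :
    ∀ n, ∀ z ∈ Z, ∀ᵐ ω ∂μ,
      (μ[fun ω' => ‖x (n + 1) ω' - z‖ ^ 2 | sigmaUpTo x n]) ω
        ≤ ‖x n ω - z‖ ^ 2
          - (μ[fun ω' => lam n ω' * (2 - lam n ω') * ‖d n ω'‖ ^ 2 | sigmaUpTo x n]) ω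
          + δ n ω z := by
  -- boundedness of lam in L^∞
  have hlam_top : ∀ k, MemLp (lam k) ⊤ μ := by
    intro k
    obtain ⟨c, hc⟩ := hlam_bdd k
    refine memLp_top_of_bound (hlam_meas k).aestronglyMeasurable c ?_
    filter_upwards [hc, hlam_pos k] with ω h1 h2
    rw [Real.norm_eq_abs, abs_of_pos h2]; exact h1
  -- x k ∈ L²
  have hxL2 : ∀ k, MemLp (x k) 2 μ := by
    intro k
    induction k with
    | zero => exact hx0
    | succ k ih =>
      have hxk : x (k + 1) = fun ω => x k ω - lam k ω • d k ω := funext (hupdate k)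
      rw [hxk]
      exact ih.sub ((hd k).smul (hlam_top k))
  intro n z hz
  have hm : sigmaUpTo x n ≤ m0 := hsub n
  -- x n is measurable w.r.t. sigmaUpTo x n
  have hxm : Measurable[sigmaUpTo x n] (x n) := by
    have h1 : MeasurableSpace.comap (x n) inferInstance ≤ sigmaUpTo x n :=
      le_iSup₂ (f := fun i (_ : i ∈ Set.Iic n) => MeasurableSpace.comap (x i) inferInstance)
        n (Set.mem_Iic.2 le_rfl)
    exact measurable_iff_comap_le.mpr h1
  obtain ⟨c, hc⟩ := hlam_bdd n
  -- abbreviations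
  set f2 : Ω → ℝ := fun ω => ‖x n ω - z‖ ^ 2 with hf2_def
  set f3 : Ω → ℝ := fun ω => lam n ω * (2 - lam n ω) * ‖d n ω‖ ^ 2 with hf3_def
  set f4 : Ω → ℝ := fun ω => lam n ω * (inner ℝ (z + d n ω - x n ω) (d n ω) : ℝ) with hf4_def
  -- integrability facts
  have hxz : MemLp (fun ω => x n ω - z) 2 μ := (hxL2 n).sub (memLp_const z)
  have hf2_int : Integrable f2 μ := by
    have := hxz.norm.integrable_sq
    simpa [hf2_def] using this
  have hd2_int : Integrable (fun ω => ‖d n ω‖ ^ 2) μ := (hd n).norm.integrable_sq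
  have hlam_bound : ∀ᵐ ω ∂μ, ‖lam n ω * (2 - lam n ω)‖ ≤ c * (2 + |c|) := by
    filter_upwards [hc, hlam_pos n] with ω h1 h2
    rw [Real.norm_eq_abs, abs_mul, abs_of_pos h2]
    have h3 : |2 - lam n ω| ≤ 2 + |c| := by
      rw [abs_sub_le_iff]
      constructor <;> nlinarith [abs_nonneg c, le_abs_self c]
    calc lam n ω * |2 - lam n ω| ≤ c * |2 - lam n ω| :=
          mul_le_mul_of_nonneg_right h1 (abs_nonneg _)
      _ ≤ c * (2 + |c|) := by
          have hc0 : 0 ≤ c := le_trans h2.le h1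
          exact mul_le_mul_of_nonneg_left h3 hc0
  have hf3_int : Integrable f3 μ := by
    have := hd2_int.bdd_mul
      (((hlam_meas n).mul (measurable_const.sub (hlam_meas n))).aestronglyMeasurable)
      hlam_bound
    simpa [hf3_def, mul_assoc] using this
  have hu : MemLp (fun ω => z + d n ω - x n ω) 2 μ :=
    ((memLp_const z).add (hd n)).sub (hxL2 n)
  have hinner_int : Integrable (fun ω => (inner ℝ (z + d n ω - x n ω) (d n ω) : ℝ)) μ := by
    have hmul : MemLp ((fun ω => ‖z + d n ω - x n ω‖) • fun ω => ‖d n ω‖) 1 μ :=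
      (hd n).norm.smul hu.norm
        (hpqr := ⟨by rw [inv_one]; exact ENNReal.inv_two_add_inv_two⟩)
    have hmul_int : Integrable (fun ω => ‖z + d n ω - x n ω‖ * ‖d n ω‖) μ := by
      have := memLp_one_iff_integrable.mp hmul
      simpa [Pi.smul_apply, smul_eq_mul, Pi.mul_def] using this
    refine hmul_int.mono' (AEStronglyMeasurable.inner hu.aestronglyMeasurable
      (hd n).aestronglyMeasurable) ?_
    filter_upwards with ω
    rw [Real.norm_eq_abs]
    exact abs_real_inner_le_norm _ _
  have hf4_int : Integrable f4 μ := by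
    have hb : ∀ᵐ ω ∂μ, ‖lam n ω‖ ≤ c := by
      filter_upwards [hc, hlam_pos n] with ω h1 h2
      rw [Real.norm_eq_abs, abs_of_pos h2]; exact h1
    exact hinner_int.bdd_mul (hlam_meas n).aestronglyMeasurable hb
  -- pointwise algebraic identity
  have key : (fun ω => ‖x (n + 1) ω - z‖ ^ 2) = f2 - f3 + (2 : ℝ) • f4 := by
    funext ω
    simp only [Pi.add_apply, Pi.sub_apply, Pi.smul_apply, smul_eq_mul, hf2_def, hf3_def,
      hf4_def, hupdate n ω]
    rw [sub_right_comm, norm_sub_sq_real, real_inner_smul_right, norm_smul,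
      Real.norm_eq_abs, mul_pow, sq_abs]
    have h2 : (inner ℝ (z + d n ω - x n ω) (d n ω) : ℝ)
        = ‖d n ω‖ ^ 2 - inner ℝ (x n ω - z) (d n ω) := by
      rw [inner_sub_left, inner_add_left, real_inner_self_eq_norm_sq, inner_sub_left]
      ring
    rw [h2]; ring
  -- conditional expectation computation
  have hcond : μ[fun ω' => ‖x (n + 1) ω' - z‖ ^ 2 | sigmaUpTo x n]
      =ᵐ[μ] fun ω => f2 ω - (μ[f3 | sigmaUpTo x n]) ω + 2 * (μ[f4 | sigmaUpTo x n]) ω := by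
    have h2m : StronglyMeasurable[sigmaUpTo x n] f2 := by
      letI : MeasurableSpace Ω := sigmaUpTo x n
      exact ((hxm.sub_const z).norm.pow_const 2).stronglyMeasurable
    have e1 : μ[f2 - f3 + (2 : ℝ) • f4 | sigmaUpTo x n]
        =ᵐ[μ] μ[f2 - f3 | sigmaUpTo x n] + μ[(2 : ℝ) • f4 | sigmaUpTo x n] :=
      condExp_add (hf2_int.sub hf3_int) (hf4_int.smul (2 : ℝ)) _
    have e2 : μ[f2 - f3 | sigmaUpTo x n] =ᵐ[μ] μ[f2 | sigmaUpTo x n] - μ[f3 | sigmaUpTo x n] :=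
      condExp_sub hf2_int hf3_int _
    have e3 : μ[(2 : ℝ) • f4 | sigmaUpTo x n] =ᵐ[μ] (2 : ℝ) • μ[f4 | sigmaUpTo x n] :=
      condExp_smul (2 : ℝ) f4 _
    have e4 : μ[f2 | sigmaUpTo x n] = f2 :=
      condExp_of_stronglyMeasurable hm h2m hf2_int
    rw [key]
    filter_upwards [e1, e2, e3] with ω h1 h2' h3
    simp only [Pi.add_apply, Pi.sub_apply, Pi.smul_apply, smul_eq_mul] at *
    rw [h1, h2', h3, e4]
  filter_upwards [hcond, hgeom n z hz] with ω h1 h2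
  rw [h1]
  have : 2 * (μ[f4 | sigmaUpTo x n]) ω ≤ δ n ω z := by
    have := h2
    simp only [hf4_def] at *
    linarith
  simp only [hf2_def, hf3_def] at *
  linarith
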